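/- Let G be a finite group whose Sylow p-subgroup is abelian, and let H be a normal p-subgroup of G. Then N(G) ⊆ N(H ⋊ G/H), where H ⋊ G/H is the semidirect product with respect to the natural conjugation action of G/H on H. -/

import Mathlib

/-!
Common definitions: the set `N(G)` of conjugacy class sizes, `A`-groups,
the largest `p`-power `|G||_p` dividing an element of `N(G)`, the Fitting subgroup,
and the natural conjugation action of `G ⧸ H` on an abelian normal subgroup `H`
(used to form the semidirect product `H ⋊ G/H`).
-/

/-- `N(G)`: the set of conjugacy class sizes (indices of centralizers) of `G`. -/
def indexSet (G : Type*) [Group G] : Set ℕ :=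
  {n | ∃ x : G, n = (Subgroup.centralizer {x}).index}

/-- A finite group is an `A`-group if all its Sylow subgroups are abelian. -/
def IsAGroup (G : Type*) [Group G] : Prop :=
  ∀ (p : ℕ), p.Prime → ∀ P : Sylow p G, ∀ a b : (P : Subgroup G), a * b = b * a

/-- `|G||_p`: the highest power of `p` dividing some element of `N(G)`. -/
noncomputable def maxPPart (G : Type*) [Group G] (p : ℕ) : ℕ :=
  sSup {m | (∃ k : ℕ, m = p ^ k) ∧ ∃ n ∈ indexSet G, m ∣ n}

open scoped Classical in
/-- The natural action of `G ⧸ H` on an abelian normal subgroup `H`, induced by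
conjugation (`h ↦ g * h * g⁻¹`); it is used to form the semidirect product `H ⋊ G/H`.
(Junk value — the trivial action — if `H` is not abelian; see `quotConj_eq` below.) -/
noncomputable def quotConj (G : Type*) [Group G] (H : Subgroup G) [H.Normal] :
    G ⧸ H →* MulAut ↥H :=
  if h : H ≤ (MulAut.conjNormal (H := H)).ker then
    QuotientGroup.lift H MulAut.conjNormal h
  else 1

/-- When `H` is abelian, `quotConj` is indeed the conjugation action `h ↦ g * h * g⁻¹`. -/
theorem quotConj_eq (G : Type*) [Group G] (H : Subgroup G) [H.Normal]
    (hab : ∀ a b : ↥H, a * b = b * a) (g : G) :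
    quotConj G H (g : G ⧸ H) = MulAut.conjNormal g := by
  have hker : H ≤ (MulAut.conjNormal (H := H)).ker := by
    intro x hx
    rw [MonoidHom.mem_ker]
    ext y
    have h2 : x * (y : G) = (y : G) * x := congrArg Subtype.val (hab ⟨x, hx⟩ y)
    simp only [MulAut.conjNormal_apply, MulAut.one_apply]
    rw [mul_inv_eq_iff_eq_mul]
    exact h2
  rw [quotConj, dif_pos hker]
  rfl

/-- The Fitting subgroup: the join of all normal nilpotent subgroups. -/
def fitting (G : Type*) [Group G] : Subgroup G :=
  ⨆ H ∈ {H : Subgroup G | H.Normal ∧ Group.IsNilpotent ↥H}, H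

instance fitting_normal (G : Type*) [Group G] : (fitting G).Normal := by
  constructor
  intro n hn g
  rw [fitting, iSup_subtype'] at hn ⊢
  refine Subgroup.iSup_induction _
    (C := fun x => g * x * g⁻¹ ∈
      ⨆ H : {H : Subgroup G | H.Normal ∧ Group.IsNilpotent ↥H}, (H : Subgroup G))
    hn (fun H x hx => ?_) ?_ (fun x y hx hy => ?_)
  · exact Subgroup.mem_iSup_of_mem H (H.2.1.conj_mem x hx g)
  · simpa using Subgroup.one_mem _
  · have h2 := Subgroup.mul_mem _ hx hy
    have h3 : g * (x * y) * g⁻¹ = (g * x * g⁻¹) * (g * y * g⁻¹) := by group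
    show g * (x * y) * g⁻¹ ∈ _
    rwa [h3]

private lemma tele_fix {M : Type*} [Group M] {s v : M} (hfix : s⁻¹ * v * s = v) :
    ∀ j : ℕ, (s ^ j)⁻¹ * v * s ^ j = v := by
  intro j
  induction j with
  | zero => simp
  | succ n ih =>
    have h1 : (s ^ (n+1))⁻¹ * v * s ^ (n+1) = s⁻¹ * ((s ^ n)⁻¹ * v * s ^ n) * s := by
      rw [pow_succ]; group
    rw [h1, ih, hfix]

private lemma tele_pow {M : Type*} [Group M] {s w v : M}
    (hv : v = s⁻¹ * w * s * w⁻¹) (hfix : s⁻¹ * v * s = v) :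
    ∀ j : ℕ, v ^ j = (s ^ j)⁻¹ * w * s ^ j * w⁻¹ := by
  intro j
  induction j with
  | zero => simp
  | succ n ih =>
    have h2 : v ^ (n+1) = v * v ^ n := by rw [pow_succ]; exact (Commute.refl v).pow_left n |>.eq
    rw [h2, ih]
    have h3 : v = (s ^ n)⁻¹ * (s⁻¹ * w * s * w⁻¹) * s ^ n := by
      rw [← hv]; exact (tele_fix hfix n).symm
    conv_lhs => rw [h3]
    rw [pow_succ]
    group

private lemma pow_coprime_eq_one {p m : ℕ} (hp : p.Prime) {M : Type*} [Group M] {v : M}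
    (hv : ∃ k, v ^ p ^ k = 1) (hm : v ^ m = 1) (hpm : ¬ p ∣ m) : v = 1 := by
  obtain ⟨k, hk⟩ := hv
  have h1 : orderOf v ∣ p ^ k := orderOf_dvd_of_pow_eq_one hk
  have h2 : orderOf v ∣ m := orderOf_dvd_of_pow_eq_one hm
  have hcop : Nat.Coprime (p ^ k) m :=
    Nat.Coprime.pow_left _ ((Nat.Prime.coprime_iff_not_dvd hp).2 hpm)
  have h3 : orderOf v ∣ Nat.gcd (p ^ k) m := Nat.dvd_gcd h1 h2
  rw [Nat.Coprime.gcd_eq_one hcop] at h3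
  exact orderOf_eq_one_iff.1 (Nat.dvd_one.1 h3)

private lemma transfer_lemma {Γ M : Type*} [Group Γ] [Finite Γ] [Group M] [Finite M]
    (hM : ∀ a b : M, a * b = b * a) (ρ : Γ →* MulAut M) (S : Subgroup Γ) (d : Γ → M)
    (hd : ∀ a b : Γ, d (a * b) = d a * ρ a (d b))
    (hdS : ∀ t ∈ S, d t = 1)
    (hcop : Nat.Coprime S.index (Nat.card M)) :
    ∃ h₀ : M, ∀ a : Γ, d a = h₀ * (ρ a h₀)⁻¹ := by
  letI : CommGroup M := { (inferInstance : Group M) with mul_comm := hM }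
  classical
  haveI : Fintype (Γ ⧸ S) := Fintype.ofFinite _
  have hNcard : S.index = Fintype.card (Γ ⧸ S) := by
    rw [Subgroup.index, Nat.card_eq_fintype_card]
  set N := S.index with hN
  set v : M := ∏ j : Γ ⧸ S, d (Quotient.out j) with hv
  have key : ∀ a : Γ, (d a) ^ N = v * (ρ a v)⁻¹ := by
    intro a
    have h1 : ∀ j : Γ ⧸ S, ρ a (d (Quotient.out j)) = (d a)⁻¹ * d (Quotient.out (a • j)) := by
      intro j
      have h2 : (Quotient.out (a • j))⁻¹ * (a * Quotient.out j) ∈ S := by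
        rw [← QuotientGroup.eq, QuotientGroup.out_eq']
        have h2a := MulAction.Quotient.mk_smul_out S a j
        rw [smul_eq_mul] at h2a
        exact h2a.symm
      have h3 : a * Quotient.out j
          = Quotient.out (a • j) * ((Quotient.out (a • j))⁻¹ * (a * Quotient.out j)) := by
        group
      have h4 : d (a * Quotient.out j) = d (Quotient.out (a • j)) := by
        rw [h3, hd, hdS _ h2, map_one, mul_one]
      have h5 := hd a (Quotient.out j)
      rw [h4] at h5
      rw [h5, inv_mul_cancel_left]
    have h6 : ρ a v = ((d a)⁻¹) ^ N * v := by
      calc ρ a v = ∏ j : Γ ⧸ S, ρ a (d (Quotient.out j)) := by rw [hv, map_prod]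
      _ = ∏ j : Γ ⧸ S, ((d a)⁻¹ * d (Quotient.out (a • j))) :=
          Finset.prod_congr rfl (fun j _ => h1 j)
      _ = ((d a)⁻¹) ^ N * ∏ j : Γ ⧸ S, d (Quotient.out (a • j)) := by
          rw [Finset.prod_mul_distrib, Finset.prod_const, Finset.card_univ, hNcard]
      _ = ((d a)⁻¹) ^ N * v := by
          congr 1
          rw [hv]
          exact Fintype.prod_equiv (MulAction.toPerm a) _ _ (fun j => rfl)
    calc (d a) ^ N = v * (v⁻¹ * (((d a)⁻¹) ^ N)⁻¹) := by
          rw [inv_pow, inv_inv, mul_inv_cancel_left]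
    _ = v * (ρ a v)⁻¹ := by rw [h6, mul_inv_rev]
  obtain ⟨N', hN'⟩ : ∃ N', N * N' ≡ 1 [MOD Nat.card M] := by
    rcases Nat.lt_or_ge 1 (Nat.card M) with h | h
    · obtain ⟨b, -, hb⟩ := Nat.exists_mul_mod_eq_one_of_coprime hcop h
      exact ⟨b, by unfold Nat.ModEq; rw [hb, Nat.mod_eq_of_lt h]⟩
    · have h1 : Nat.card M = 1 := le_antisymm h Nat.card_pos
      exact ⟨1, by unfold Nat.ModEq; rw [h1]; simp [Nat.mod_one]⟩
  refine ⟨v ^ N', fun a => ?_⟩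
  have h7 : (d a) ^ (N * N') = v ^ N' * (ρ a (v ^ N'))⁻¹ := by
    rw [pow_mul, key, mul_pow, map_pow, inv_pow]
  have h8 : (d a) ^ (N * N') = d a := by
    conv_rhs => rw [← pow_one (d a)]
    rw [pow_eq_pow_iff_modEq]
    exact Nat.ModEq.of_dvd (orderOf_dvd_natCard (d a)) hN'
  rw [← h8, h7]


set_option maxHeartbeats 3200000 in
/-- Let `G` be a finite group whose Sylow `p`-subgroups are abelian and `H`
a normal `p`-subgroup of `G`. Then `N(G) ⊆ N(H ⋊ G/H)` for the natural conjugation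
action of `G/H` on `H` (which is well defined since such an `H` is abelian). -/
theorem stmt_6 (p : ℕ) (hp : p.Prime) (G : Type*) [Group G] [Finite G]
    (hSyl : ∀ P : Sylow p G, ∀ a b : ↥(P : Subgroup G), a * b = b * a)
    (H : Subgroup G) [H.Normal] (hHp : IsPGroup p ↥H) :
    indexSet G ⊆ indexSet (SemidirectProduct ↥H (G ⧸ H) (quotConj G H)) := by
  haveI : Fact p.Prime := ⟨hp⟩
  classical
  obtain ⟨P₀, hHP₀⟩ := hHp.exists_le_sylow
  have habG : ∀ a ∈ H, ∀ b ∈ H, a * b = b * a := fun a ha b hb =>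
    congrArg Subtype.val (hSyl P₀ ⟨a, hHP₀ ha⟩ ⟨b, hHP₀ hb⟩)
  have hab : ∀ a b : ↥H, a * b = b * a := fun a b => Subtype.ext (habG a a.2 b b.2)
  intro n hn
  obtain ⟨x, hx⟩ := hn
  -- ## p-part decomposition of x
  have hn₀ : orderOf x ≠ 0 := (orderOf_pos x).ne'
  set pk := p ^ (orderOf x).factorization p with hpkdef
  set m := orderOf x / pk with hmdef
  have hpkm : pk * m = orderOf x := Nat.ordProj_mul_ordCompl_eq_self (orderOf x) p
  have hpm : ¬ p ∣ m := Nat.not_dvd_ordCompl hp hn₀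
  have hcop : Nat.Coprime pk m :=
    Nat.Coprime.pow_left _ ((Nat.Prime.coprime_iff_not_dvd hp).2 hpm)
  obtain ⟨eu, heu1, heu2⟩ := Nat.chineseRemainder hcop 1 0
  obtain ⟨es, hes1, hes2⟩ := Nat.chineseRemainder hcop 0 1
  set u := x ^ eu with hudef
  set s := x ^ es with hsdef
  have husx : u * s = x := by
    have h1 : eu + es ≡ 1 [MOD pk] := by simpa using Nat.ModEq.add heu1 hes1
    have h2 : eu + es ≡ 1 [MOD m] := by simpa using Nat.ModEq.add heu2 hes2
    have h3 : eu + es ≡ 1 [MOD orderOf x] := by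
      rw [← hpkm]; exact (Nat.modEq_and_modEq_iff_modEq_mul hcop).1 ⟨h1, h2⟩
    calc u * s = x ^ (eu + es) := (pow_add x eu es).symm
    _ = x ^ 1 := by rw [pow_eq_pow_iff_modEq]; exact h3
    _ = x := pow_one x
  have hsm : s ^ m = 1 := by
    rw [hsdef, ← pow_mul]
    apply orderOf_dvd_iff_pow_eq_one.1
    rw [← hpkm]
    exact Nat.mul_dvd_mul_right (Nat.modEq_zero_iff_dvd.1 hes1) m
  have hupk : u ^ pk = 1 := by
    rw [hudef, ← pow_mul]
    apply orderOf_dvd_iff_pow_eq_one.1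
    rw [← hpkm, Nat.mul_comm pk m]
    exact Nat.mul_dvd_mul_right (Nat.modEq_zero_iff_dvd.1 heu2) pk
  have hxu : x * u = u * x := ((Commute.refl x).pow_right eu).eq
  -- ## the subgroups K, D
  set Q := G ⧸ H with hQdef
  set K := Subgroup.comap (QuotientGroup.mk' H) (Subgroup.centralizer {((x : G) : Q)}) with hKdef
  have hmemK : ∀ a : G, a ∈ K ↔ x⁻¹ * a * x * a⁻¹ ∈ H := by
    intro a
    rw [hKdef, Subgroup.mem_comap, Subgroup.mem_centralizer_iff]
    simp only [Set.mem_singleton_iff, forall_eq, QuotientGroup.mk'_apply]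
    rw [← QuotientGroup.mk_mul, ← QuotientGroup.mk_mul, QuotientGroup.eq]
    constructor
    · intro h
      have h2 := Subgroup.Normal.conj_mem ‹H.Normal› _ h a
      have h3 : a * ((x * a)⁻¹ * (a * x)) * a⁻¹ = x⁻¹ * a * x * a⁻¹ := by group
      rwa [h3] at h2
    · intro h
      have h2 := Subgroup.Normal.conj_mem ‹H.Normal› _ h a⁻¹
      have h3 : a⁻¹ * (x⁻¹ * a * x * a⁻¹) * a⁻¹⁻¹ = (x * a)⁻¹ * (a * x) := by group
      rwa [h3] at h2
  have hHK : H ≤ K := by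
    intro h hh
    rw [hmemK]
    have h1 : x⁻¹ * h * x⁻¹⁻¹ ∈ H := Subgroup.Normal.conj_mem ‹H.Normal› _ hh x⁻¹
    rw [inv_inv] at h1
    exact H.mul_mem h1 (H.inv_mem hh)
  set D := Subgroup.centralizer ({x} : Set G) with hDdef
  have hmemD : ∀ g : G, g ∈ D ↔ x * g = g * x := by
    intro g
    rw [hDdef, Subgroup.mem_centralizer_iff]
    simp
  have hDK : D ≤ K := by
    intro g hg
    rw [hmemK]
    have h1 : x⁻¹ * g * x * g⁻¹ = 1 := by
      have h0 : x⁻¹ * g * x * g⁻¹ = x⁻¹ * (x * g) * g⁻¹ := by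
        rw [(hmemD g).1 hg]; group
      rw [h0]; group
    rw [h1]; exact H.one_mem
  -- ## the Sylow subgroup T of K containing H and u
  have huD : u ∈ D := (hmemD u).2 hxu
  have huK : u ∈ K := hDK huD
  have hzu : IsPGroup p (Subgroup.zpowers u) := by
    intro g
    obtain ⟨i, hi⟩ := g.2
    refine ⟨(orderOf x).factorization p, ?_⟩
    apply Subtype.ext
    rw [SubmonoidClass.coe_pow, OneMemClass.coe_one]
    have : (g : G) = u ^ i := hi.symm
    rw [this, ← zpow_natCast, ← zpow_mul, mul_comm, zpow_mul, zpow_natCast, ← hpkdef, hupk,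
      one_zpow]
  have hWp : IsPGroup p ↥(H ⊔ Subgroup.zpowers u) := IsPGroup.to_sup_of_normal_left hHp hzu
  have hWK : H ⊔ Subgroup.zpowers u ≤ K := sup_le hHK (Subgroup.zpowers_le.2 huK)
  obtain ⟨Tk, hWTk⟩ :=
    (hWp.of_equiv (Subgroup.subgroupOfEquivOfLe hWK).symm).exists_le_sylow
  set T := Subgroup.map K.subtype (Tk : Subgroup ↥K) with hTdef
  have hmemTk : ∀ a : ↥K, (a : G) ∈ T ↔ a ∈ (Tk : Subgroup ↥K) := by
    intro a
    constructor
    · rintro ⟨b, hb, hba⟩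
      have : b = a := Subtype.ext hba
      rwa [← this]
    · intro h; exact ⟨a, h, rfl⟩
  have hHT : H ≤ T := by
    intro h hh
    refine ⟨⟨h, hHK hh⟩, hWTk ?_, rfl⟩
    rw [Subgroup.mem_subgroupOf]
    exact Subgroup.mem_sup_left hh
  have huT : u ∈ T := by
    refine ⟨⟨u, huK⟩, hWTk ?_, rfl⟩
    rw [Subgroup.mem_subgroupOf]
    exact Subgroup.mem_sup_right (Subgroup.mem_zpowers u)
  have hTp : IsPGroup p ↥T := Tk.2.map K.subtype
  obtain ⟨P₁, hTP₁⟩ := hTp.exists_le_sylow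
  have hTcomm : ∀ a ∈ T, ∀ b ∈ T, a * b = b * a := fun a ha b hb =>
    congrArg Subtype.val (hSyl P₁ ⟨a, hTP₁ ha⟩ ⟨b, hTP₁ hb⟩)
  have hucH : ∀ h ∈ H, u * h = h * u := fun h hh => hTcomm u huT h (hHT hh)
  have hxsconj : ∀ h ∈ H, x⁻¹ * h * x = s⁻¹ * h * s := by
    intro h hh
    have h2 : u⁻¹ * h * u = h := by rw [mul_assoc, ← hucH h hh]; group
    calc x⁻¹ * h * x = s⁻¹ * (u⁻¹ * h * u) * s := by rw [← husx]; group
    _ = s⁻¹ * h * s := by rw [h2]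
  -- ## the homomorphism f and the subgroups A = ker f, I = range f
  set τ : MulAut ↥H := MulAut.conjNormal x with hτdef
  have hτ_apply : ∀ k : ↥H, ((τ k : ↥H) : G) = x * k * x⁻¹ := fun k => rfl
  have hτinv_apply : ∀ k : ↥H, ((τ⁻¹ k : ↥H) : G) = x⁻¹ * k * x :=
    fun k => MulAut.conjNormal_inv_apply x k
  set f : ↥H →* ↥H :=
    { toFun := fun k => τ⁻¹ k * k⁻¹
      map_one' := by simp
      map_mul' := by
        intro a b
        show τ⁻¹ (a * b) * (a * b)⁻¹ = (τ⁻¹ a * a⁻¹) * (τ⁻¹ b * b⁻¹)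
        rw [map_mul, mul_inv_rev]
        calc τ⁻¹ a * τ⁻¹ b * (b⁻¹ * a⁻¹) = τ⁻¹ a * (τ⁻¹ b * b⁻¹ * a⁻¹) := by group
        _ = τ⁻¹ a * (a⁻¹ * (τ⁻¹ b * b⁻¹)) := by rw [hab (τ⁻¹ b * b⁻¹) a⁻¹]
        _ = τ⁻¹ a * a⁻¹ * (τ⁻¹ b * b⁻¹) := by group } with hfdef
  have hfval : ∀ k : ↥H, f k = τ⁻¹ k * k⁻¹ := fun k => rfl
  set A := f.ker with hAdef
  set I := f.range with hIdef
  have hmemA : ∀ k : ↥H, k ∈ A ↔ τ⁻¹ k = k := by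
    intro k
    rw [hAdef, MonoidHom.mem_ker, hfval, mul_inv_eq_one]
  have hmemA' : ∀ k : ↥H, k ∈ A ↔ τ k = k := by
    intro k
    rw [hmemA]
    constructor
    · intro h; conv_lhs => rw [← h]
      simp
    · intro h; conv_lhs => rw [← h]
      simp
  have hmemAx : ∀ k : ↥H, k ∈ A ↔ x * (k : G) = (k : G) * x := by
    intro k
    rw [hmemA']
    constructor
    · intro h
      have h1 : ((τ k : ↥H) : G) = k := by rw [h]
      rw [hτ_apply] at h1
      calc x * (k : G) = (x * k * x⁻¹) * x := by group
      _ = (k : G) * x := by rw [h1]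
    · intro h
      apply Subtype.ext
      rw [hτ_apply, h]
      group
  -- the coprimality lemma : A ∩ I = 1
  have hL1 : ∀ v : ↥H, v ∈ A → v ∈ I → v = 1 := by
    intro v hvA hvI
    obtain ⟨k, hk⟩ := hvI
    have hvG : (v : G) = s⁻¹ * (k : G) * s * (k : G)⁻¹ := by
      rw [← hk, hfval]
      have h1 : ((τ⁻¹ k * k⁻¹ : ↥H) : G) = (x⁻¹ * k * x) * (k : G)⁻¹ := by
        rw [Subgroup.coe_mul, hτinv_apply]; rfl
      rw [h1, hxsconj (k : G) k.2]
    have hfixG : s⁻¹ * (v : G) * s = v := by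
      have h1 : τ⁻¹ v = v := (hmemA v).1 hvA
      have h2 : x⁻¹ * (v : G) * x = v := by rw [← hτinv_apply, h1]
      rw [← hxsconj (v : G) v.2, h2]
    have h3 := tele_pow hvG hfixG m
    rw [hsm] at h3
    simp only [inv_one, one_mul, mul_one] at h3
    have hvm : v ^ m = 1 := by
      apply Subtype.ext
      rw [SubmonoidClass.coe_pow, OneMemClass.coe_one, h3]
      group
    exact pow_coprime_eq_one hp (hHp v) hvm hpm
  -- ## the decomposition H = A × I
  have hcardAI : Nat.card ↥H = Nat.card ↥I * Nat.card ↥A := by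
    rw [Subgroup.card_eq_card_quotient_mul_card_subgroup A, hAdef]
    congr 1
    exact Nat.card_congr (QuotientGroup.quotientKerEquivRange f).toEquiv
  set φAI : ↥A × ↥I →* ↥H :=
    { toFun := fun q => (q.1 : ↥H) * (q.2 : ↥H)
      map_one' := by simp
      map_mul' := by
        intro q r
        simp only [Subgroup.coe_mul, Prod.fst_mul, Prod.snd_mul]
        calc ((q.1 : ↥H) * r.1) * ((q.2 : ↥H) * r.2)
            = (q.1 : ↥H) * (r.1 * q.2) * r.2 := by group
        _ = (q.1 : ↥H) * (q.2 * r.1) * r.2 := by rw [hab (r.1 : ↥H) q.2]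
        _ = ((q.1 : ↥H) * q.2) * ((r.1 : ↥H) * r.2) := by group } with hφdef
  have hφinj : Function.Injective φAI := by
    rw [injective_iff_map_eq_one]
    rintro ⟨a, b⟩ hq
    have hq' : (a : ↥H) * b = 1 := hq
    have h1 : (a : ↥H) = (b : ↥H)⁻¹ := by
      rw [eq_inv_iff_mul_eq_one]; exact hq'
    have h2 : (a : ↥H) ∈ I := h1 ▸ I.inv_mem b.2
    have h3 : (a : ↥H) = 1 := hL1 _ a.2 h2
    have h4 : (b : ↥H) = 1 := by
      rw [h3] at hq'; simpa using hq'
    exact Prod.ext (Subtype.ext h3) (Subtype.ext h4)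
  have hφbij : Function.Bijective φAI := by
    refine (Nat.bijective_iff_injective_and_card φAI).2 ⟨hφinj, ?_⟩
    rw [Nat.card_prod, hcardAI, Nat.mul_comm]
  set μ := MulEquiv.ofBijective φAI hφbij with hμdef
  set π : ↥H →* ↥H :=
    A.subtype.comp ((MonoidHom.fst ↥A ↥I).comp μ.symm.toMonoidHom) with hπdef
  have hπval : ∀ v : ↥H, π v = ((μ.symm v).1 : ↥H) := fun v => rfl
  have hπ_unique : ∀ (α β : ↥H), (hα : α ∈ A) → (hβ : β ∈ I) → π (α * β) = α := by
    intro α β hα hβ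
    have h1 : μ (⟨α, hα⟩, ⟨β, hβ⟩) = α * β := rfl
    have h2 : μ.symm (α * β) = (⟨α, hα⟩, ⟨β, hβ⟩) := by
      rw [MulEquiv.symm_apply_eq, h1]
    rw [hπval, h2]
  have hπA : ∀ v : ↥H, π v ∈ A := fun v => ((μ.symm v).1).2
  have hdecomp : ∀ v : ↥H, ∃ β, β ∈ I ∧ v = π v * β := by
    intro v
    refine ⟨((μ.symm v).2 : ↥H), (μ.symm v).2.2, ?_⟩
    conv_lhs => rw [← μ.apply_symm_apply v]
    rfl
  have hπI : ∀ v : ↥H, v ∈ I ↔ π v = 1 := by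
    intro v
    constructor
    · intro h
      have h1 := hπ_unique 1 v (one_mem A) h
      simpa using h1
    · intro h
      obtain ⟨β, hβ, hv⟩ := hdecomp v
      rw [h, one_mul] at hv
      rw [hv]; exact hβ
  -- ## the cocycle c and its projection d
  have hcmem : ∀ a : ↥K, x⁻¹ * (a : G) * x * (a : G)⁻¹ ∈ H := fun a => (hmemK a).1 a.2
  set c : ↥K → ↥H := fun a => ⟨x⁻¹ * (a : G) * x * (a : G)⁻¹, hcmem a⟩ with hcdef
  set σK : ↥K →* MulAut ↥H := (MulAut.conjNormal (H := H)).comp K.subtype with hσdef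
  have hσ_apply : ∀ (a : ↥K) (k : ↥H), ((σK a k : ↥H) : G) = a * k * (a : G)⁻¹ :=
    fun a k => rfl
  have hσinv_apply : ∀ (a : ↥K) (k : ↥H), ((σK a⁻¹ k : ↥H) : G) = (a : G)⁻¹ * k * a := by
    intro a k
    rw [hσ_apply]
    simp
  -- σK a commutes with τ
  have hστ : ∀ (a : ↥K) (k : ↥H), σK a (τ k) = τ (σK a k) := by
    intro a k
    apply Subtype.ext
    rw [hσ_apply, hτ_apply, hτ_apply, hσ_apply]
    have h1 : x⁻¹ * (a : G) * x = (c a : G) * a := by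
      rw [hcdef]; group
    have h2 : (a : G) * (k : G) * (a : G)⁻¹ ∈ H := Subgroup.Normal.conj_mem ‹H.Normal› _ k.2 a
    have h3 : (c a : G) * ((a : G) * k * (a : G)⁻¹) * (c a : G)⁻¹ = (a : G) * k * (a : G)⁻¹ := by
      rw [habG _ (c a).2 _ h2]; group
    calc (a : G) * (x * k * x⁻¹) * (a : G)⁻¹
        = x * ((x⁻¹ * a * x) * k * (x⁻¹ * a * x)⁻¹) * x⁻¹ := by group
    _ = x * (((c a : G) * a) * k * ((c a : G) * a)⁻¹) * x⁻¹ := by rw [h1]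
    _ = x * ((c a : G) * ((a : G) * k * (a : G)⁻¹) * (c a : G)⁻¹) * x⁻¹ := by group
    _ = x * ((a : G) * k * (a : G)⁻¹) * x⁻¹ := by rw [h3]
  have hστinv : ∀ (a : ↥K) (k : ↥H), σK a (τ⁻¹ k) = τ⁻¹ (σK a k) := by
    intro a k
    have h1 := hστ a (τ⁻¹ k)
    have h2 : τ (τ⁻¹ k) = k := by simp
    rw [h2] at h1
    rw [h1]
    simp
  have hfσ : ∀ (a : ↥K) (k : ↥H), f (σK a k) = σK a (f k) := by
    intro a k
    rw [hfval, hfval, map_mul, map_inv, hστinv]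
  have hAinv : ∀ (a : ↥K) (k : ↥H), k ∈ A → σK a k ∈ A := by
    intro a k hk
    rw [hAdef, MonoidHom.mem_ker] at hk ⊢
    rw [hfσ, hk, map_one]
  have hIinv : ∀ (a : ↥K) (k : ↥H), k ∈ I → σK a k ∈ I := by
    intro a k hk
    obtain ⟨j, hj⟩ := hk
    exact ⟨σK a j, by rw [hfσ, hj]⟩
  have hπσ : ∀ (a : ↥K) (v : ↥H), π (σK a v) = σK a (π v) := by
    intro a v
    obtain ⟨β, hβ, hv⟩ := hdecomp v
    conv_lhs => rw [hv]
    rw [map_mul]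
    exact hπ_unique _ _ (hAinv a _ (hπA v)) (hIinv a _ hβ)
  have hc_mul : ∀ a b : ↥K, c (a * b) = c a * σK a (c b) := by
    intro a b
    apply Subtype.ext
    rw [Subgroup.coe_mul, hσ_apply, hcdef]
    show x⁻¹ * ((a : G) * b) * x * ((a : G) * b)⁻¹
        = (x⁻¹ * a * x * (a : G)⁻¹) * ((a : G) * (x⁻¹ * b * x * (b : G)⁻¹) * (a : G)⁻¹)
    group
  set d : ↥K → ↥H := fun a => π (c a) with hddef
  have hdA : ∀ a : ↥K, d a ∈ A := fun a => hπA _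
  have hd_mul : ∀ a b : ↥K, d (a * b) = d a * σK a (d b) := by
    intro a b
    rw [hddef]
    show π (c (a * b)) = π (c a) * σK a (π (c b))
    rw [hc_mul, map_mul, hπσ]
  have hdD : ∀ a : ↥K, (a : G) ∈ D → d a = 1 := by
    intro a ha
    have h1 : c a = 1 := by
      apply Subtype.ext
      show x⁻¹ * (a : G) * x * (a : G)⁻¹ = 1
      have h0 : x⁻¹ * (a : G) * x * (a : G)⁻¹ = x⁻¹ * (x * a) * (a : G)⁻¹ := by
        rw [(hmemD a).1 ha]; group
      rw [h0]; group
    rw [hddef]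
    show π (c a) = 1
    rw [h1, map_one]
  have hcI : ∀ a : ↥K, d a = 1 ↔ c a ∈ I := by
    intro a
    rw [hddef]
    exact (hπI (c a)).symm
  have hdH : ∀ a : ↥K, (a : G) ∈ H → d a = 1 := by
    intro a ha
    rw [hcI]
    refine ⟨⟨(a : G), ha⟩, ?_⟩
    apply Subtype.ext
    rw [hfval, Subgroup.coe_mul, hτinv_apply]
    rfl
  -- ## d vanishes on T
  have hdT : ∀ a : ↥K, (a : G) ∈ T → d a = 1 := by
    intro a haT
    obtain ⟨β, hβI, hcd⟩ := hdecomp (c a)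
    obtain ⟨k', hk'⟩ := hβI
    have hua : u * (a : G) = a * u := hTcomm u huT a haT
    have hca : (c a : G) = s⁻¹ * (a : G) * s * (a : G)⁻¹ := by
      show x⁻¹ * (a : G) * x * (a : G)⁻¹ = _
      have h2 : u⁻¹ * (a : G) * u = a := by rw [mul_assoc, ← hua]; group
      calc x⁻¹ * (a : G) * x * (a : G)⁻¹
          = s⁻¹ * (u⁻¹ * a * u) * s * (a : G)⁻¹ := by rw [← husx]; group
      _ = s⁻¹ * (a : G) * s * (a : G)⁻¹ := by rw [h2]
    have hβG : (β : G) = s⁻¹ * (k' : G) * s * (k' : G)⁻¹ := by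
      rw [← hk', hfval]
      have h1 : ((τ⁻¹ k' * k'⁻¹ : ↥H) : G) = (x⁻¹ * k' * x) * (k' : G)⁻¹ := by
        rw [Subgroup.coe_mul, hτinv_apply]; rfl
      rw [h1, hxsconj (k' : G) k'.2]
    -- the A-part α := d a  satisfies  α = s⁻¹ w s w⁻¹  with w = a * k'
    have hαval : ((d a : ↥H) : G) = (c a : G) * (β : G)⁻¹ := by
      have : (c a : G) = (d a : G) * (β : G) := by
        rw [hddef]; exact congrArg Subtype.val hcd
      rw [this]; group
    set w : G := (a : G) * (k' : G)⁻¹ with hwdef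
    have hk'T : (k' : G) ∈ T := hHT k'.2
    have hsk'H : s⁻¹ * (k' : G) * s ∈ H := by
      have := Subgroup.Normal.conj_mem ‹H.Normal› _ k'.2 s⁻¹
      simpa using this
    have hJH : (k' : G) * (s⁻¹ * (k' : G) * s)⁻¹ ∈ H := H.mul_mem k'.2 (H.inv_mem hsk'H)
    have hcomm1 : (a : G)⁻¹ * ((k' : G) * (s⁻¹ * (k' : G) * s)⁻¹)
        = ((k' : G) * (s⁻¹ * (k' : G) * s)⁻¹) * (a : G)⁻¹ :=
      hTcomm _ (T.inv_mem haT) _ (hHT hJH)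
    have hcomm2 : (k' : G) * (s⁻¹ * (k' : G) * s)⁻¹ = (s⁻¹ * (k' : G) * s)⁻¹ * k' := by
      have := habG _ k'.2 _ (H.inv_mem hsk'H)
      exact this
    have hαG : ((d a : ↥H) : G) = s⁻¹ * w * s * w⁻¹ := by
      rw [hαval, hca, hβG, hwdef]
      calc (s⁻¹ * (a : G) * s * (a : G)⁻¹) * (s⁻¹ * (k' : G) * s * (k' : G)⁻¹)⁻¹
          = (s⁻¹ * a * s) * ((a : G)⁻¹ * ((k' : G) * (s⁻¹ * (k' : G) * s)⁻¹)) := by group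
      _ = (s⁻¹ * a * s) * ((((k' : G)) * (s⁻¹ * (k' : G) * s)⁻¹) * (a : G)⁻¹) := by rw [hcomm1]
      _ = (s⁻¹ * a * s) * (((s⁻¹ * (k' : G) * s)⁻¹ * k') * (a : G)⁻¹) := by rw [hcomm2]
      _ = s⁻¹ * ((a : G) * (k' : G)⁻¹) * s * ((a : G) * (k' : G)⁻¹)⁻¹ := by group
    have hfixα : s⁻¹ * ((d a : ↥H) : G) * s = ((d a : ↥H) : G) := by
      have h1 : τ⁻¹ (d a) = d a := (hmemA _).1 (hdA a)
      have h2 : x⁻¹ * ((d a : ↥H) : G) * x = ((d a : ↥H) : G) := by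
        rw [← hτinv_apply, h1]
      rw [← hxsconj _ (d a).2, h2]
    have h3 := tele_pow hαG hfixα m
    rw [hsm] at h3
    simp only [inv_one, one_mul, mul_one] at h3
    have hdm : (d a) ^ m = 1 := by
      apply Subtype.ext
      rw [SubmonoidClass.coe_pow, OneMemClass.coe_one, h3]
      group
    exact pow_coprime_eq_one hp (hHp (d a)) hdm hpm
  -- ## transfer: d is a coboundary
  have hTcop : Nat.Coprime (Tk : Subgroup ↥K).index (Nat.card ↥H) := by
    obtain ⟨E, hE⟩ := IsPGroup.iff_card.1 hHp
    rw [hE]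
    apply Nat.Coprime.pow_right
    rw [Nat.coprime_comm]
    apply (Nat.Prime.coprime_iff_not_dvd hp).2
    exact Tk.not_dvd_index' Subgroup.index_ne_zero_of_finite
  obtain ⟨h₀, hh₀⟩ := transfer_lemma hab σK (Tk : Subgroup ↥K) d hd_mul
    (fun t ht => hdT t ((hmemTk t).2 ht)) hTcop
  -- ## the element yhat and its centralizer
  set yhat : SemidirectProduct ↥H Q (quotConj G H) := ⟨h₀, ((x : G) : Q)⟩ with hydef
  set R : Subgroup Q := Subgroup.map (QuotientGroup.mk' H) D with hRdef
  set C := Subgroup.centralizer ({yhat} : Set (SemidirectProduct ↥H Q (quotConj G H))) with hCdef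
  have hφx : ∀ g : G, quotConj G H ((g : G) : Q) = MulAut.conjNormal g :=
    fun g => quotConj_eq G H hab g
  have hmemC : ∀ z : SemidirectProduct ↥H Q (quotConj G H),
      z ∈ C ↔ z.left ∈ A ∧ z.right ∈ R := by
    intro z
    rw [hCdef, Subgroup.mem_centralizer_iff]
    simp only [Set.mem_singleton_iff, forall_eq]
    constructor
    · intro hz
      have hzr : ((x : G) : Q) * z.right = z.right * ((x : G) : Q) := by
        have h0 := congrArg SemidirectProduct.right hz
        simpa only [SemidirectProduct.mul_right] using h0
      have hzl : h₀ * (quotConj G H ((x : G) : Q)) z.left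
          = z.left * (quotConj G H z.right) h₀ := by
        have h0 := congrArg SemidirectProduct.left hz
        simpa only [SemidirectProduct.mul_left] using h0
      obtain ⟨a₀, ha₀⟩ : ∃ a₀ : G, ((a₀ : G) : Q) = z.right :=
        ⟨Quotient.out z.right, QuotientGroup.out_eq' z.right⟩
      have ha₀K : a₀ ∈ K := by
        rw [hKdef, Subgroup.mem_comap, Subgroup.mem_centralizer_iff]
        simp only [Set.mem_singleton_iff, forall_eq, QuotientGroup.mk'_apply]
        rw [ha₀]
        exact hzr
      set a : ↥K := ⟨a₀, ha₀K⟩ with hadef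
      have hσa : quotConj G H z.right = σK a := by
        rw [← ha₀, hφx]; rfl
      have heq : h₀ * τ z.left = z.left * σK a h₀ := by
        rw [← hσa]
        have h0 : quotConj G H ((x : G) : Q) = τ := hφx x
        rw [← h0]
        exact hzl
      have hσa2 : σK a h₀ = z.left⁻¹ * (h₀ * τ z.left) := by rw [heq]; group
      have h2 : d a = h₀ * (τ z.left)⁻¹ * h₀⁻¹ * z.left := by
        rw [hh₀ a, hσa2]; group
      have h6 : d a = z.left * (τ z.left)⁻¹ := by
        rw [h2, hab h₀ (τ z.left)⁻¹]
        calc (τ z.left)⁻¹ * h₀ * h₀⁻¹ * z.left = (τ z.left)⁻¹ * z.left := by group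
        _ = z.left * (τ z.left)⁻¹ := hab _ _
      have h8 : d a ∈ I := by
        rw [h6]
        refine ⟨τ z.left, ?_⟩
        rw [hfval]
        congr 1
        simp
      have h9 : d a = 1 := hL1 _ (hdA a) h8
      constructor
      · -- z.left ∈ A
        rw [h9] at h6
        exact (hmemA' _).2 (mul_inv_eq_one.1 h6.symm).symm
      · -- z.right ∈ R
        have h11 : d a⁻¹ = 1 := by
          have h12 := hd_mul a a⁻¹
          rw [mul_inv_cancel, h9, one_mul] at h12
          have h13 : d (1 : ↥K) = 1 := hdD 1 D.one_mem
          rw [h13] at h12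
          exact (σK a).injective (by rw [← h12, map_one])
        obtain ⟨h', hh'⟩ := (hcI a⁻¹).1 h11
        have hfh' : x⁻¹ * (h' : G) * x * (h' : G)⁻¹ = x⁻¹ * a₀⁻¹ * x * a₀ := by
          have h14 := congrArg Subtype.val hh'
          rw [hfval] at h14
          have h15 : ((τ⁻¹ h' * h'⁻¹ : ↥H) : G) = x⁻¹ * (h' : G) * x * (h' : G)⁻¹ := by
            rw [Subgroup.coe_mul, hτinv_apply]; rfl
          rw [h15] at h14
          rw [h14]
          show x⁻¹ * a₀⁻¹ * x * a₀⁻¹⁻¹ = x⁻¹ * a₀⁻¹ * x * a₀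
          rw [inv_inv]
        have hgD : a₀ * (h' : G) ∈ D := by
          rw [hmemD]
          calc x * (a₀ * (h' : G))
              = a₀ * x * (x⁻¹ * a₀⁻¹ * x * a₀) * h' := by group
          _ = a₀ * x * (x⁻¹ * (h' : G) * x * (h' : G)⁻¹) * h' := by rw [hfh']
          _ = a₀ * (h' : G) * x := by group
        refine Subgroup.mem_map.2 ⟨a₀ * (h' : G), hgD, ?_⟩
        rw [QuotientGroup.mk'_apply, QuotientGroup.mk_mul]
        have hmkh' : ((h' : G) : Q) = 1 := (QuotientGroup.eq_one_iff _).2 h'.2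
        rw [hmkh', mul_one, ha₀]
    · rintro ⟨hl, hr⟩
      obtain ⟨g, hgD, hgr⟩ := Subgroup.mem_map.1 hr
      have hgK : g ∈ K := hDK hgD
      have hdg : d ⟨g, hgK⟩ = 1 := hdD _ hgD
      have hσg : σK ⟨g, hgK⟩ h₀ = h₀ := by
        have h0 := hh₀ ⟨g, hgK⟩
        rw [hdg] at h0
        exact (mul_inv_eq_one.1 h0.symm).symm
      have hql : quotConj G H z.right = σK ⟨g, hgK⟩ := by
        rw [← hgr, QuotientGroup.mk'_apply, hφx g]; rfl
      have hτl : τ z.left = z.left := (hmemA' _).1 hl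
      have hleft : (yhat * z).left = (z * yhat).left := by
        rw [SemidirectProduct.mul_left, SemidirectProduct.mul_left]
        show h₀ * (quotConj G H ((x : G) : Q)) z.left = z.left * (quotConj G H z.right) h₀
        have h0 : quotConj G H ((x : G) : Q) = τ := hφx x
        rw [h0, hql, hτl, hσg]
        exact hab h₀ z.left
      have hright : (yhat * z).right = (z * yhat).right := by
        rw [SemidirectProduct.mul_right, SemidirectProduct.mul_right]
        show ((x : G) : Q) * z.right = z.right * ((x : G) : Q)
        rw [← hgr, QuotientGroup.mk'_apply]
        show ((x : G) : Q) * ((g : G) : Q) = ((g : G) : Q) * ((x : G) : Q)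
        rw [← QuotientGroup.mk_mul, ← QuotientGroup.mk_mul, (hmemD g).1 hgD]
      exact SemidirectProduct.ext hleft hright
  -- ## counting
  set ψ : ↥D →* Q := (QuotientGroup.mk' H).comp D.subtype with hψdef
  have hψrange : ψ.range = R := by
    rw [hψdef, MonoidHom.range_comp, Subgroup.range_subtype]
  have hkerψ : ∀ g : ↥D, g ∈ ψ.ker ↔ ((g : ↥D) : G) ∈ H := by
    intro g
    rw [MonoidHom.mem_ker, hψdef]
    show (QuotientGroup.mk' H) (((g : ↥D) : G)) = 1 ↔ _
    rw [QuotientGroup.mk'_apply, QuotientGroup.eq_one_iff]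
  have eKerA : ↥ψ.ker ≃ ↥A :=
    { toFun := fun g => ⟨⟨((g : ↥D) : G), (hkerψ g).1 g.2⟩, by
        rw [hmemAx]
        exact (hmemD _).1 (g : ↥D).2⟩
      invFun := fun k => ⟨⟨((k : ↥H) : G), (hmemD _).2 ((hmemAx _).1 k.2)⟩,
        (hkerψ _).2 (k : ↥H).2⟩
      left_inv := fun g => by
        apply Subtype.ext; apply Subtype.ext; rfl
      right_inv := fun k => by
        apply Subtype.ext; apply Subtype.ext; rfl }
  have eC : ↥C ≃ ↥A × ↥R :=
    { toFun := fun z =>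
        (⟨(z : SemidirectProduct ↥H Q (quotConj G H)).left, ((hmemC _).1 z.2).1⟩,
         ⟨(z : SemidirectProduct ↥H Q (quotConj G H)).right, ((hmemC _).1 z.2).2⟩)
      invFun := fun q => ⟨⟨(q.1 : ↥H), (q.2 : Q)⟩, (hmemC _).2 ⟨q.1.2, q.2.2⟩⟩
      left_inv := fun z => by apply Subtype.ext; rfl
      right_inv := fun q => by
        refine Prod.ext ?_ ?_ <;> apply Subtype.ext <;> rfl }
  have hcardC : Nat.card ↥C = Nat.card ↥A * Nat.card ↥R := by
    rw [Nat.card_congr eC, Nat.card_prod]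
  have hcardD : Nat.card ↥D = Nat.card ↥A * Nat.card ↥R := by
    rw [Subgroup.card_eq_card_quotient_mul_card_subgroup ψ.ker]
    have h1 : Nat.card (↥D ⧸ ψ.ker) = Nat.card ↥R := by
      rw [← hψrange]
      exact Nat.card_congr (QuotientGroup.quotientKerEquivRange ψ).toEquiv
    rw [h1, Nat.card_congr eKerA, Nat.mul_comm]
  have eSD : SemidirectProduct ↥H Q (quotConj G H) ≃ ↥H × Q :=
    ⟨fun z => (z.left, z.right), fun q => ⟨q.1, q.2⟩, fun z => rfl, fun q => rfl⟩
  have hcardG : Nat.card (SemidirectProduct ↥H Q (quotConj G H)) = Nat.card G := by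
    rw [Nat.card_congr eSD, Nat.card_prod,
      Subgroup.card_eq_card_quotient_mul_card_subgroup H, Nat.mul_comm]
  refine ⟨yhat, ?_⟩
  rw [hx]
  show D.index = C.index
  have h1 := Subgroup.card_mul_index D
  have h2 := Subgroup.card_mul_index C
  rw [hcardG, hcardC, ← hcardD] at h2
  have h3 : Nat.card ↥D * D.index = Nat.card ↥D * C.index := by rw [h1, h2]
  exact Nat.eq_of_mul_eq_mul_left Nat.card_pos h3
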